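/- Let m be a positive integer and b : ℕ → ℤ. The sequence of weighted Catalan numbers C_n^b reduced modulo m is eventually periodic (i.e., there exist N ≥ 0 and T > 0 such that C_{n+T}^b ≡ C_n^b (mod m) for all n ≥ N) if and only if there exists a nonnegative integer k such that m divides the product b(0)·b(1)⋯b(k). -/

import Mathlib

/-- `wcat b n x`: `wcat b 0 x = 1` and
`wcat b (n+1) x = b x * ∑_{i+j=n} wcat b i (x+1) * wcat b j x`.
The weighted Catalan number `C_n^b` is `wcat b n 0`. -/
def wcat (b : ℕ → ℤ) : ℕ → ℕ → ℤ
  | 0, _ => 1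
  | n + 1, x => b x * ∑ i ∈ (Finset.range (n + 1)).attach,
      wcat b i.1 (x + 1) * wcat b (n - i.1) x
termination_by n _ => n
decreasing_by
  · exact Finset.mem_range.mp i.2
  · exact Nat.lt_succ_of_le (Nat.sub_le n i.1)

lemma wcat_zero (b : ℕ → ℤ) (x : ℕ) : wcat b 0 x = 1 := by rw [wcat]

lemma wcat_succ (b : ℕ → ℤ) (n x : ℕ) :
    wcat b (n+1) x = b x * ∑ i ∈ Finset.range (n+1), wcat b i (x+1) * wcat b (n-i) x := by
  rw [wcat, Finset.sum_attach (Finset.range (n+1)) (fun i => wcat b i (x+1) * wcat b (n-i) x)]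

open PowerSeries in
noncomputable def Fser (R : Type*) [CommRing R] (b : ℕ → ℤ) (x : ℕ) : PowerSeries R :=
  PowerSeries.mk fun n => ((wcat b n x : ℤ) : R)

open PowerSeries in
lemma Fser_eq (R : Type*) [CommRing R] (b : ℕ → ℤ) (x : ℕ) :
    Fser R b x = 1 + (C ((b x : ℤ) : R)) * X * Fser R b (x+1) * Fser R b x := by
  ext n
  cases n with
  | zero => simp [Fser, wcat_zero]
  | succ n =>
    have hX : (coeff (n+1)) (X * (C ((b x : ℤ) : R) * (Fser R b (x+1) * Fser R b x)))
        = (coeff n) (C ((b x : ℤ) : R) * (Fser R b (x+1) * Fser R b x)) := by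
      simpa using PowerSeries.coeff_X_pow_mul ((C ((b x : ℤ) : R) * (Fser R b (x+1) * Fser R b x))) 1 n
    rw [map_add, show (C ((b x : ℤ) : R)) * X * Fser R b (x+1) * Fser R b x
        = X * ((C ((b x : ℤ) : R)) * (Fser R b (x+1) * Fser R b x)) from by ring,
      hX, PowerSeries.coeff_C_mul, PowerSeries.coeff_mul,
      Finset.Nat.sum_antidiagonal_eq_sum_range_succ_mk]
    show (coeff (n+1)) (PowerSeries.mk fun n => ((wcat b n x : ℤ) : R)) = _
    rw [PowerSeries.coeff_mk, wcat_succ]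
    push_cast
    simp [Fser]

open PowerSeries in
lemma Fser_mul_eq_one (R : Type*) [CommRing R] (b : ℕ → ℤ) (x : ℕ) :
    Fser R b x * (1 - (C ((b x : ℤ) : R)) * X * Fser R b (x+1)) = 1 := by
  linear_combination Fser_eq R b x

/-- Truncation lemma -/
lemma wcat_trunc (b : ℕ → ℤ) (k : ℕ) :
    ∀ n x, (∏ i ∈ Finset.Icc x k, b i) ∣
      (wcat b n x - wcat (fun i => if i ≤ k then b i else 0) n x) := by
  set b' := fun i => if i ≤ k then b i else 0 with hb'
  intro n
  induction n using Nat.strong_induction_on with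
  | _ n ih =>
    intro x
    match n with
    | 0 => simp [wcat_zero]
    | n + 1 =>
      by_cases hx : x ≤ k
      · have hbx : b' x = b x := if_pos hx
        rw [wcat_succ, wcat_succ, hbx, ← mul_sub, ← Finset.sum_sub_distrib]
        have hprod : ∏ i ∈ Finset.Icc x k, b i = b x * ∏ i ∈ Finset.Icc (x+1) k, b i := by
          rw [← Finset.Ioc_insert_left hx, Finset.prod_insert (by simp)]
          congr 1
          exact (Finset.Icc_add_one_left_eq_Ioc x k).symm ▸ rfl
        rw [hprod]
        apply mul_dvd_mul_left
        apply Finset.dvd_sum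
        intro i hi
        have h1 := ih i (Nat.lt_succ_of_le (Finset.mem_range_succ_iff.mp hi)) (x+1)
        have h2 : (∏ j ∈ Finset.Icc (x+1) k, b j) ∣ (wcat b (n-i) x - wcat b' (n-i) x) := by
          refine dvd_trans ?_ (ih (n-i) (Nat.lt_succ_of_le (Nat.sub_le n i)) x)
          rw [hprod]; exact dvd_mul_left _ _
        have key : wcat b i (x+1) * wcat b (n-i) x - wcat b' i (x+1) * wcat b' (n-i) x
            = (wcat b i (x+1) - wcat b' i (x+1)) * wcat b (n-i) x
              + wcat b' i (x+1) * (wcat b (n-i) x - wcat b' (n-i) x) := by ring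
        rw [key]
        exact dvd_add (h1.mul_right _) (h2.mul_left _)
      · have : Finset.Icc x k = ∅ := Finset.Icc_eq_empty (by omega)
        rw [this, Finset.prod_empty]
        exact one_dvd _

open PowerSeries

/-- Truncated series is rational. -/
lemma trunc_rational (R : Type*) [CommRing R] (b : ℕ → ℤ) (k : ℕ) :
    ∀ d x, k + 1 ≤ x + d →
      ∃ P Q : Polynomial R, Q.coeff 0 = 1 ∧
        (Q : PowerSeries R) * Fser R (fun i => if i ≤ k then b i else 0) x = P := by
  set b' := fun i => if i ≤ k then b i else 0 with hb'
  intro d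
  induction d with
  | zero =>
    intro x hx
    refine ⟨1, 1, by simp, ?_⟩
    have hF : Fser R b' x = 1 := by
      ext n
      cases n with
      | zero => simp [Fser, wcat_zero]
      | succ n =>
        have : b' x = 0 := if_neg (by omega)
        simp [Fser, wcat_succ, this]
    simp [hF]
  | succ d ihd =>
    intro x hx
    by_cases h : k + 1 ≤ x + d
    · exact ihd x h
    · obtain ⟨P, Q, hQ0, hQ⟩ := ihd (x+1) (by omega)
      refine ⟨Q, Q - Polynomial.C ((b' x : ℤ) : R) * Polynomial.X * P, by simp [hQ0], ?_⟩
      push_cast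
      linear_combination (Q : PowerSeries R) * Fser_mul_eq_one R b' x
        + (C ((b' x : ℤ) : R) * X * Fser R b' x) * hQ

lemma extract_periodic {R : Type*} (c : ℕ → R) (d : ℕ) (hd : 0 < d)
    (s : ℕ → (Fin d → R))
    (hs : ∀ n (j : Fin d), s n j = c (n + (j : ℕ))) (Φ : (Fin d → R) → (Fin d → R)) (n₀ : ℕ)
    (hstep : ∀ n, n₀ ≤ n → s (n + 1) = Φ (s n)) (i j : ℕ) (hlt : i < j)
    (hsij : s (n₀ + i) = s (n₀ + j)) :
    ∃ N T : ℕ, 0 < T ∧ ∀ n, N ≤ n → c (n + T) = c n := by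
  have key : ∀ r, s (n₀ + i + r) = s (n₀ + j + r) := by
    intro r
    induction r with
    | zero => simpa using hsij
    | succ r ihr =>
      have h1 := hstep (n₀ + i + r) (by omega)
      have h2 := hstep (n₀ + j + r) (by omega)
      rw [show n₀ + i + (r+1) = (n₀ + i + r) + 1 by omega, h1, ihr, ← h2,
        show (n₀ + j + r) + 1 = n₀ + j + (r+1) by omega]
  refine ⟨n₀ + i, j - i, by omega, ?_⟩
  intro n hn
  have hk := key (n - (n₀ + i))
  rw [show n₀ + i + (n - (n₀ + i)) = n by omega,
    show n₀ + j + (n - (n₀ + i)) = n + (j - i) by omega] at hk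
  have := congrFun hk ⟨0, hd⟩
  rw [hs, hs] at this
  simpa using this.symm

/-- Rational power series over a finite ring has eventually periodic coefficients. -/
lemma periodic_of_rational {R : Type*} [CommRing R] [Fintype R] (c : ℕ → R)
    (P Q : Polynomial R) (hQ0 : Q.coeff 0 = 1)
    (heq : (Q : PowerSeries R) * PowerSeries.mk c = P) :
    ∃ N T : ℕ, 0 < T ∧ ∀ n, N ≤ n → c (n + T) = c n := by
  classical
  set dq := Q.natDegree with hdq
  set d := dq + 1 with hd
  have hd0 : 0 < d := by omega
  set n₀ := max (P.natDegree + 1) d with hn₀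
  -- the recurrence
  have hrec : ∀ n, n₀ ≤ n → c (n + d) = -∑ i ∈ Finset.Icc 1 dq, Q.coeff i * c (n + d - i) := by
    intro n hn
    have hdeg : P.natDegree < n + d := by omega
    have h0 : (PowerSeries.coeff (n + d)) ((Q : PowerSeries R) * PowerSeries.mk c) = 0 := by
      rw [heq, Polynomial.coeff_coe]
      exact Polynomial.coeff_eq_zero_of_natDegree_lt hdeg
    rw [PowerSeries.coeff_mul, Finset.Nat.sum_antidiagonal_eq_sum_range_succ_mk] at h0
    simp only [Polynomial.coeff_coe, PowerSeries.coeff_mk] at h0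
    have hsub : ∑ i ∈ Finset.range (n + d + 1), Q.coeff i * c (n + d - i)
        = ∑ i ∈ Finset.range (dq + 1), Q.coeff i * c (n + d - i) := by
      symm
      apply Finset.sum_subset
      · apply Finset.range_subset_range.mpr; omega
      · intro i hi1 hi2
        have hgt : dq < i := by
          by_contra hcon
          exact hi2 (Finset.mem_range.mpr (by omega))
        rw [Polynomial.coeff_eq_zero_of_natDegree_lt hgt, zero_mul]
    rw [hsub, Finset.sum_range_succ'] at h0
    simp only [hQ0, one_mul, Nat.sub_zero] at h0
    have h0' : c (n + d) = -∑ k ∈ Finset.range dq, Q.coeff (k+1) * c (n + d - (k+1)) :=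
      eq_neg_of_add_eq_zero_right h0
    rw [h0']
    congr 1
    rw [← Finset.Ico_add_one_right_eq_Icc, Finset.sum_Ico_eq_sum_range]
    simp [add_comm]
  -- the state map
  set Φ : (Fin d → R) → (Fin d → R) := fun v j =>
    if h : (j : ℕ) + 1 < d then v ⟨j + 1, h⟩
    else -∑ i ∈ Finset.Icc 1 dq, Q.coeff i *
      v ⟨d - max i 1, Nat.sub_lt hd0 (Nat.lt_of_lt_of_le Nat.one_pos (le_max_right i 1))⟩ with hΦ
  set s : ℕ → (Fin d → R) := fun n j => c (n + (j : ℕ)) with hs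
  have hstep : ∀ n, n₀ ≤ n → s (n + 1) = Φ (s n) := by
    intro n hn
    funext j
    by_cases h : (j : ℕ) + 1 < d
    · simp only [hs, hΦ, dif_pos h]
      congr 1; omega
    · have hj : (j : ℕ) = d - 1 := by omega
      simp only [hs, hΦ, dif_neg h]
      have h1 : n + 1 + (j : ℕ) = n + d := by omega
      rw [h1, hrec n hn]
      congr 1
      apply Finset.sum_congr rfl
      intro i hi
      have hi1 : 1 ≤ i ∧ i ≤ dq := Finset.mem_Icc.mp hi
      congr 1
      show c (n + d - i) = c (n + (d - max i 1))
      congr 1; omega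
  obtain ⟨i, j, hij, hsij⟩ := Finite.exists_ne_map_eq_of_infinite (fun n : ℕ => s (n₀ + n))
  rcases Nat.lt_or_ge i j with hlt | hge
  · exact extract_periodic c d hd0 s (fun n j => rfl) Φ n₀ hstep i j hlt hsij
  · have hlt : j < i := by omega
    exact extract_periodic c d hd0 s (fun n j => rfl) Φ n₀ hstep j i hlt hsij.symm

variable {R : Type*} [CommRing R]

/-- Convergent polynomials (a, b, c, d) of the continued fraction. -/
noncomputable def conv (β : ℕ → R) : ℕ →
    Polynomial R × Polynomial R × Polynomial R × Polynomial R
  | 0 => (0, 1, -(Polynomial.C (β 0)) * Polynomial.X, 1)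
  | k+1 =>
    let p := conv β k
    (-(Polynomial.C (β (k+1))) * Polynomial.X * p.2.1, p.1 + p.2.1,
     -(Polynomial.C (β (k+1))) * Polynomial.X * p.2.2.2, p.2.2.1 + p.2.2.2)

lemma conv_mobius (β : ℕ → R) (F : ℕ → PowerSeries R)
    (hF : ∀ x, F x * (1 - C (β x) * X * F (x+1)) = 1) (k : ℕ) :
    (((conv β k).2.2.1 : PowerSeries R) * F (k+1) + ((conv β k).2.2.2 : PowerSeries R)) * F 0
      = ((conv β k).1 : PowerSeries R) * F (k+1) + ((conv β k).2.1 : PowerSeries R) := by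
  induction k with
  | zero =>
    simp only [conv, Polynomial.coe_mul, Polynomial.coe_neg, Polynomial.coe_C,
      Polynomial.coe_X, Polynomial.coe_one, Polynomial.coe_zero]
    linear_combination hF 0
  | succ k ih =>
    simp only [conv, Polynomial.coe_mul, Polynomial.coe_neg, Polynomial.coe_C,
      Polynomial.coe_X, Polynomial.coe_one, Polynomial.coe_zero, Polynomial.coe_add]
    linear_combination (1 - C (β (k+1)) * X * F (k+2)) * ih
      + ((((conv β k).1 : PowerSeries R) - ((conv β k).2.2.1 : PowerSeries R) * F 0) * hF (k+1))

lemma conv_det (β : ℕ → R) (k : ℕ) :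
    (conv β k).1 * (conv β k).2.2.2 - (conv β k).2.1 * (conv β k).2.2.1
      = Polynomial.C (∏ i ∈ Finset.range (k+1), β i) * Polynomial.X^(k+1) := by
  induction k with
  | zero =>
    simp only [conv]
    rw [Finset.prod_range_one]
    ring
  | succ k ih =>
    simp only [conv]
    rw [Finset.prod_range_succ, map_mul]
    linear_combination (Polynomial.C (β (k+1)) * Polynomial.X) * ih

lemma conv_deg (β : ℕ → R) (k : ℕ) :
    (conv β k).1.natDegree ≤ (k+1)/2 ∧ (conv β k).2.1.natDegree ≤ k/2 ∧
    (conv β k).2.2.1.natDegree ≤ k/2 + 1 ∧ (conv β k).2.2.2.natDegree ≤ (k+1)/2 := by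
  induction k with
  | zero =>
    refine ⟨by simp [conv], by simp [conv], ?_, by simp [conv]⟩
    simp only [conv]
    calc (-(Polynomial.C (β 0)) * Polynomial.X).natDegree
        ≤ (-(Polynomial.C (β 0))).natDegree + Polynomial.X.natDegree :=
          Polynomial.natDegree_mul_le
      _ ≤ 0 + 1 := by
          gcongr
          · rw [Polynomial.natDegree_neg]; exact le_of_eq (Polynomial.natDegree_C _)
          · exact Polynomial.natDegree_X_le
      _ ≤ 0/2 + 1 := by norm_num
  | succ k ih =>
    obtain ⟨ha, hb, hc, hd⟩ := ih
    have hmul : ∀ (q : Polynomial R) (m : ℕ), q.natDegree ≤ m →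
        (-(Polynomial.C (β (k+1))) * Polynomial.X * q).natDegree ≤ m + 1 := by
      intro q m hq
      calc (-(Polynomial.C (β (k+1))) * Polynomial.X * q).natDegree
          ≤ (-(Polynomial.C (β (k+1))) * Polynomial.X).natDegree + q.natDegree :=
            Polynomial.natDegree_mul_le
        _ ≤ 1 + m := by
            gcongr
            calc (-(Polynomial.C (β (k+1))) * Polynomial.X).natDegree
                ≤ (-(Polynomial.C (β (k+1)))).natDegree + Polynomial.X.natDegree :=
                  Polynomial.natDegree_mul_le
              _ ≤ 0 + 1 := by
                  gcongr
                  · rw [Polynomial.natDegree_neg]; exact le_of_eq (Polynomial.natDegree_C _)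
                  · exact Polynomial.natDegree_X_le
              _ = 1 := by norm_num
        _ = m + 1 := by omega
    refine ⟨?_, ?_, ?_, ?_⟩
    · exact le_trans (hmul _ _ hb) (by omega)
    · exact le_trans (Polynomial.natDegree_add_le _ _) (by simp only [sup_le_iff]; omega)
    · exact le_trans (hmul _ _ hd) (by omega)
    · exact le_trans (Polynomial.natDegree_add_le _ _) (by simp only [sup_le_iff]; omega)

lemma conv_coeff0 (β : ℕ → R) (k : ℕ) :
    (conv β k).2.2.2.coeff 0 = 1 ∧ (conv β k).2.2.1.coeff 0 = 0 := by
  induction k with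
  | zero => constructor <;> simp [conv]
  | succ k ih =>
    obtain ⟨h1, h2⟩ := ih
    constructor
    · simp only [conv, Polynomial.coeff_add, h1, h2]; ring
    · simp only [conv]
      rw [show -(Polynomial.C (β (k+1))) * Polynomial.X * (conv β k).2.2.2
          = (-(Polynomial.C (β (k+1))) * (conv β k).2.2.2) * Polynomial.X by ring]
      simp [Polynomial.coeff_mul_X]

lemma no_rational {K : Type*} [Field K] (β : ℕ → K) (hβ : ∀ i, β i ≠ 0)
    (F : ℕ → PowerSeries K) (hF : ∀ x, F x * (1 - C (β x) * X * F (x+1)) = 1)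
    (hF0 : ∀ x, PowerSeries.constantCoeff (F x) = 1)
    (U V : Polynomial K) (hV : V.coeff 0 ≠ 0) (hUV : (V : PowerSeries K) * F 0 = U) :
    False := by
  set k := 2 * max U.natDegree V.natDegree + 4 with hk
  set A := (conv β k).1 with hA
  set B := (conv β k).2.1 with hB
  set Cc := (conv β k).2.2.1 with hCc
  set D := (conv β k).2.2.2 with hD
  set W := F (k+1) with hW
  set E : Polynomial K := V * A - U * Cc with hE
  have hMob := conv_mobius β F hF k
  have hdet := conv_det β k
  obtain ⟨hdA, hdB, hdC, hdD⟩ := conv_deg β k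
  obtain ⟨hc1, hc2⟩ := conv_coeff0 β k
  set Pr : K := ∏ i ∈ Finset.range (k+1), β i with hPr
  have hdetser : (A : PowerSeries K) * (D : PowerSeries K)
      - (B : PowerSeries K) * (Cc : PowerSeries K) = C Pr * X^(k+1) := by
    have h := congrArg (fun q : Polynomial K => (q : PowerSeries K)) hdet
    simpa only [Polynomial.coe_sub, Polynomial.coe_mul, Polynomial.coe_C,
      Polynomial.coe_pow, Polynomial.coe_X] using h
  have hmain : (E : PowerSeries K) * ((Cc : PowerSeries K) * W + (D : PowerSeries K))
      = (V : PowerSeries K) * (C Pr) * X^(k+1) := by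
    rw [hE]
    simp only [Polynomial.coe_sub, Polynomial.coe_mul]
    linear_combination (-((Cc : PowerSeries K) * (V : PowerSeries K))) * hMob
      + ((Cc : PowerSeries K) * ((Cc : PowerSeries K) * W + (D : PowerSeries K))) * hUV
      + (V : PowerSeries K) * hdetser
  have hunit : IsUnit ((Cc : PowerSeries K) * W + D) := by
    rw [PowerSeries.isUnit_iff_constantCoeff]
    rw [map_add, map_mul, Polynomial.constantCoeff_coe, Polynomial.constantCoeff_coe,
      hc1, hc2, hF0]
    simp
  have hXdvd : (X : PowerSeries K)^(k+1) ∣ (E : PowerSeries K) := by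
    obtain ⟨u, hu⟩ := hunit
    refine ⟨(V : PowerSeries K) * (C Pr) * ↑u⁻¹, ?_⟩
    calc (E : PowerSeries K) = (E : PowerSeries K) * (↑u * ↑u⁻¹) := by
          rw [Units.mul_inv, mul_one]
      _ = ((E : PowerSeries K) * ↑u) * ↑u⁻¹ := by ring
      _ = X^(k+1) * ((V : PowerSeries K) * (C Pr) * ↑u⁻¹) := by
          rw [hu, hmain]; ring
  have hEdeg : E.natDegree ≤ k := by
    refine le_trans (Polynomial.natDegree_sub_le _ _) ?_
    have h1 : (V * A).natDegree ≤ V.natDegree + (k+1)/2 :=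
      le_trans Polynomial.natDegree_mul_le (by gcongr)
    have h2 : (U * Cc).natDegree ≤ U.natDegree + (k/2 + 1) :=
      le_trans Polynomial.natDegree_mul_le (by gcongr)
    have hk1 : V.natDegree + (k+1)/2 ≤ k := by omega
    have hk2 : U.natDegree + (k/2 + 1) ≤ k := by omega
    omega
  have hE0 : E = 0 := by
    ext n
    rcases Nat.lt_or_ge n (k+1) with hn | hn
    · have := (PowerSeries.X_pow_dvd_iff.mp hXdvd) n hn
      rwa [Polynomial.coeff_coe] at this
    · simp only [Polynomial.coeff_zero]
      exact Polynomial.coeff_eq_zero_of_natDegree_lt (by omega)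
  rw [hE0] at hmain
  simp only [Polynomial.coe_zero, zero_mul] at hmain
  have hVne : (V : PowerSeries K) ≠ 0 := by
    intro h
    apply hV
    have := congrArg (PowerSeries.coeff 0) h
    rwa [Polynomial.coeff_coe, map_zero] at this
  have hPrne : (C Pr) ≠ 0 := by
    rw [hPr]
    simp only [ne_eq, _root_.map_eq_zero]
    exact Finset.prod_ne_zero_iff.mpr (fun i _ => hβ i)
  have hXne : (X : PowerSeries K)^(k+1) ≠ 0 := pow_ne_zero _ PowerSeries.X_ne_zero
  exact (mul_ne_zero (mul_ne_zero hVne hPrne) hXne) hmain.symm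

/-- if M divides all coeffs of A, it divides all coeffs of A * B -/
lemma dvd_coeff_mul {M : ℤ} {A B : PowerSeries ℤ}
    (hA : ∀ n, M ∣ PowerSeries.coeff n A) (n : ℕ) :
    M ∣ PowerSeries.coeff n (A * B) := by
  rw [PowerSeries.coeff_mul]
  exact Finset.dvd_sum fun p _ => Dvd.dvd.mul_right (hA p.1) _

lemma descent (p : ℕ) (hp : p.Prime) (b : ℕ → ℤ) (x : ℕ) (f v : ℕ) (hvf : v < f)
    (u : ℤ) (hu : ¬ (p:ℤ) ∣ u) (hbx : b x = (p:ℤ)^v * u)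
    (P Q : Polynomial ℤ) (hQ0 : ¬ (p:ℤ) ∣ Q.coeff 0)
    (hcong : ∀ n, ((p:ℤ)^f) ∣
      PowerSeries.coeff n ((Q : PowerSeries ℤ) * Fser ℤ b x - (P : PowerSeries ℤ))) :
    ∃ P' Q' : Polynomial ℤ, ¬ (p:ℤ) ∣ Q'.coeff 0 ∧
      ∀ n, ((p:ℤ)^(f - v)) ∣
        PowerSeries.coeff n ((Q' : PowerSeries ℤ) * Fser ℤ b (x+1) - (P' : PowerSeries ℤ)) := by
  have hpz : (p:ℤ) ≠ 0 := Int.natCast_ne_zero.mpr hp.ne_zero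
  have hppow : ((p:ℤ)^v) ≠ 0 := pow_ne_zero _ hpz
  -- ¬ p ∣ P.coeff 0
  have hP0 : ¬ (p:ℤ) ∣ P.coeff 0 := by
    have h := hcong 0
    rw [map_sub, PowerSeries.coeff_zero_eq_constantCoeff, map_mul,
      Polynomial.constantCoeff_coe, Polynomial.constantCoeff_coe] at h
    have hF0 : PowerSeries.constantCoeff (Fser ℤ b x) = 1 := by
      simp [Fser, wcat_zero]
    rw [hF0, mul_one] at h
    intro hdvd
    apply hQ0
    have hpf : (p:ℤ) ∣ (p:ℤ)^f := dvd_pow_self _ (by omega)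
    have h3 := (hpf.trans h)
    simpa using dvd_add h3 hdvd
  -- key congruence : b x * coeff n (P * F') ≡ (P - Q).coeff (n+1)  mod p^f
  have hkey : ∀ n, ((p:ℤ)^f) ∣
      b x * PowerSeries.coeff n ((P : PowerSeries ℤ) * Fser ℤ b (x+1))
        - (P - Q).coeff (n+1) := by
    intro n
    -- G := (Q * F_x - P) * (1 - C(bx) X F_{x+1}) has all coeffs div by p^f
    have hG : ∀ j, ((p:ℤ)^f) ∣ PowerSeries.coeff j
        (((Q : PowerSeries ℤ) * Fser ℤ b x - (P : PowerSeries ℤ))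
          * (1 - C (b x) * X * Fser ℤ b (x+1))) := fun j => dvd_coeff_mul hcong j
    have hGeq : ((Q : PowerSeries ℤ) * Fser ℤ b x - (P : PowerSeries ℤ))
          * (1 - C (b x) * X * Fser ℤ b (x+1))
        = (Q : PowerSeries ℤ) - (P : PowerSeries ℤ)
          + C (b x) * X * ((P : PowerSeries ℤ) * Fser ℤ b (x+1)) := by
      linear_combination (1 - C (b x) * X * Fser ℤ b (x+1)) * mul_comm ((Q : PowerSeries ℤ)) (Fser ℤ b x)
        + (Q : PowerSeries ℤ) * Fser_mul_eq_one ℤ b x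
    have h := hG (n+1)
    rw [hGeq] at h
    rw [map_add, map_sub] at h
    have hXc : PowerSeries.coeff (n+1) (C (b x) * X * ((P : PowerSeries ℤ) * Fser ℤ b (x+1)))
        = b x * PowerSeries.coeff n ((P : PowerSeries ℤ) * Fser ℤ b (x+1)) := by
      rw [show C (b x) * X * ((P : PowerSeries ℤ) * Fser ℤ b (x+1))
          = X * (C (b x) * ((P : PowerSeries ℤ) * Fser ℤ b (x+1))) by ring]
      rw [show n + 1 = n + 1 from rfl]
      have := PowerSeries.coeff_X_pow_mul (C (b x) * ((P : PowerSeries ℤ) * Fser ℤ b (x+1))) 1 n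
      simp only [pow_one] at this
      rw [this, PowerSeries.coeff_C_mul]
    rw [hXc, Polynomial.coeff_coe, Polynomial.coeff_coe] at h
    have : (P - Q).coeff (n+1) = P.coeff (n+1) - Q.coeff (n+1) := by
      simp [Polynomial.coeff_sub]
    rw [this]
    have h2 : Q.coeff (n+1) - P.coeff (n+1) + b x * PowerSeries.coeff n ((P : PowerSeries ℤ) * Fser ℤ b (x+1))
        = b x * PowerSeries.coeff n ((P : PowerSeries ℤ) * Fser ℤ b (x+1))
          - (P.coeff (n+1) - Q.coeff (n+1)) := by ring
    rw [← h2]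
    exact h
  -- p^v divides all coefficients of divX (P - Q)
  have hdivX : ∀ n, ((p:ℤ)^v) ∣ ((P - Q).divX).coeff n := by
    intro n
    rw [Polynomial.coeff_divX]
    have h := hkey n
    have hpv : ((p:ℤ)^v) ∣ ((p:ℤ)^f) := pow_dvd_pow _ (by omega)
    have h1 : ((p:ℤ)^v) ∣ b x * PowerSeries.coeff n ((P : PowerSeries ℤ) * Fser ℤ b (x+1)) := by
      rw [hbx]; exact Dvd.dvd.mul_right (Dvd.intro u rfl) _
    simpa using dvd_sub h1 (hpv.trans h)
  obtain ⟨S, hS⟩ := (Polynomial.C_dvd_iff_dvd_coeff ((p:ℤ)^v) ((P - Q).divX)).mpr hdivX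
  -- u is invertible mod p^(f-v)
  have hcop : IsCoprime ((p:ℤ)^(f-v)) u := by
    apply IsCoprime.pow_left
    rw [Prime.coprime_iff_not_dvd (Nat.prime_iff_prime_int.mp hp)]
    exact hu
  obtain ⟨w, z, hwz⟩ := hcop  -- w * p^(f-v) + z * u = 1
  refine ⟨Polynomial.C z * S, P, hP0, ?_⟩
  intro n
  -- coeff n of (P * F') - (z * S)
  have hScoeff : (p:ℤ)^v * S.coeff n = (P - Q).coeff (n+1) := by
    rw [← Polynomial.coeff_C_mul, ← hS, Polynomial.coeff_divX]
  have h := hkey n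
  rw [hbx] at h
  set c := PowerSeries.coeff n ((P : PowerSeries ℤ) * Fser ℤ b (x+1)) with hc
  -- h : p^f ∣ p^v * u * c - (P-Q).coeff (n+1) = p^v * (u * c - S.coeff n)
  have h' : ((p:ℤ)^f) ∣ (p:ℤ)^v * (u * c - S.coeff n) := by
    have : (p:ℤ)^v * (u * c - S.coeff n) = (p:ℤ)^v * u * c - (P - Q).coeff (n+1) := by
      rw [← hScoeff]; ring
    rw [this]; exact h
  have h'' : ((p:ℤ)^(f-v)) ∣ (u * c - S.coeff n) := by
    have hfv : (p:ℤ)^f = (p:ℤ)^v * (p:ℤ)^(f-v) := by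
      rw [← pow_add]; congr 1; omega
    rw [hfv] at h'
    exact (mul_dvd_mul_iff_left hppow).mp h'
  -- coeff of target
  have hcoeff : PowerSeries.coeff n (((P : Polynomial ℤ) : PowerSeries ℤ) * Fser ℤ b (x+1)
      - ((Polynomial.C z * S : Polynomial ℤ) : PowerSeries ℤ)) = c - z * S.coeff n := by
    rw [map_sub, Polynomial.coeff_coe, Polynomial.coeff_C_mul, hc]
  rw [hcoeff]
  -- c - z * S.coeff n = z * (u*c - S.coeff n) + (1 - z*u) * c,  and 1 - z*u = w * p^(f-v)
  have hzu : 1 - z * u = w * (p:ℤ)^(f-v) := by linarith [hwz]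
  have : c - z * S.coeff n = z * (u * c - S.coeff n) + (w * (p:ℤ)^(f-v)) * c := by
    rw [← hzu]; ring
  rw [this]
  exact dvd_add (Dvd.dvd.mul_left h'' z) ⟨w * c, by ring⟩

/-- a monotone bounded sequence of naturals stabilizes -/
lemma mono_stab : ∀ (t : ℕ) (f : ℕ → ℕ), Monotone f → (∀ n, f n ≤ f 0 + t) →
    ∃ K, ∀ j, K ≤ j → f j = f K := by
  intro t
  induction t using Nat.strong_induction_on with
  | _ t ih =>
    intro f hf hB
    by_cases h : ∀ n, f n = f 0
    · exact ⟨0, fun j _ => by rw [h j, h 0]⟩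
    · push_neg at h
      obtain ⟨n₀, hn₀⟩ := h
      have hlt : f 0 < f n₀ := lt_of_le_of_ne (hf (Nat.zero_le n₀)) (Ne.symm hn₀)
      have hb0 := hB n₀
      set g := fun n => f (n₀ + n) with hg
      have hgmono : Monotone g := fun a b hab => hf (by omega)
      have hgB : ∀ n, g n ≤ g 0 + (t - (f n₀ - f 0)) := by
        intro n
        have h1 := hB (n₀ + n)
        have h2 : g 0 = f n₀ := by simp [hg]
        simp only [hg, Nat.add_zero]
        omega
      obtain ⟨K, hK⟩ := ih (t - (f n₀ - f 0)) (by omega) g hgmono hgB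
      refine ⟨n₀ + K, fun j hj => ?_⟩
      have := hK (j - n₀) (by omega)
      simp only [hg] at this
      rwa [show n₀ + (j - n₀) = j by omega] at this

lemma hard_direction (m : ℕ) (hm : 0 < m) (b : ℕ → ℤ)
    (hper : ∃ N T : ℕ, 0 < T ∧ ∀ n, N ≤ n →
      wcat b (n + T) 0 ≡ wcat b n 0 [ZMOD (m : ℤ)]) :
    ∃ k : ℕ, (m : ℤ) ∣ ∏ i ∈ Finset.range (k + 1), b i := by
  classical
  by_contra hcon
  push_neg at hcon
  have hbne : ∀ i, b i ≠ 0 := by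
    intro i hbi
    exact hcon i (by rw [Finset.prod_eq_zero (Finset.self_mem_range_succ i) hbi]; exact dvd_zero _)
  have hprodne : ∀ k, (∏ i ∈ Finset.range k, b i) ≠ 0 :=
    fun k => Finset.prod_ne_zero_iff.mpr (fun i _ => hbne i)
  set vsum : ℕ → ℕ → ℕ :=
    fun p k => ((∏ i ∈ Finset.range k, b i).natAbs).factorization p with hvsum
  have hmono : ∀ p j k, j ≤ k → vsum p j ≤ vsum p k := by
    intro p j k hjk
    have hdvd : (∏ i ∈ Finset.range j, b i) ∣ (∏ i ∈ Finset.range k, b i) :=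
      Finset.prod_dvd_prod_of_subset _ _ _ (Finset.range_subset_range.mpr hjk)
    have h2 : (∏ i ∈ Finset.range j, b i).natAbs ∣ (∏ i ∈ Finset.range k, b i).natAbs :=
      Int.natAbs_dvd_natAbs.mpr hdvd
    exact (Nat.factorization_le_iff_dvd (Int.natAbs_ne_zero.mpr (hprodne j))
      (Int.natAbs_ne_zero.mpr (hprodne k))).mpr h2 p
  have hvsum_succ : ∀ p x, vsum p (x+1) = vsum p x + (b x).natAbs.factorization p := by
    intro p x
    simp only [hvsum]
    rw [Finset.prod_range_succ, Int.natAbs_mul,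
      Nat.factorization_mul (Int.natAbs_ne_zero.mpr (hprodne x)) (Int.natAbs_ne_zero.mpr (hbne x))]
    rfl
  obtain ⟨p, hp, hplt⟩ : ∃ p, p.Prime ∧ ∀ k, vsum p k < m.factorization p := by
    by_contra hnp
    push_neg at hnp
    set kp : ℕ → ℕ := fun p => if hq : p.Prime then (hnp p hq).choose else 0 with hkp
    set K := m.primeFactors.sup kp with hKdef
    have hle : m.factorization ≤ ((∏ i ∈ Finset.range K, b i).natAbs).factorization := by
      rw [Finsupp.le_iff]
      intro q hq
      have hqm : q ∈ m.primeFactors := by rwa [Nat.support_factorization] at hq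
      have hqp : q.Prime := Nat.prime_of_mem_primeFactors hqm
      have h1 : m.factorization q ≤ vsum q (kp q) := by
        simp only [hkp, dif_pos hqp]
        exact (hnp q hqp).choose_spec
      exact le_trans h1 (hmono q _ _ (Finset.le_sup hqm))
    have hdvd : m ∣ (∏ i ∈ Finset.range K, b i).natAbs :=
      (Nat.factorization_le_iff_dvd hm.ne' (Int.natAbs_ne_zero.mpr (hprodne K))).mp hle
    apply hcon K
    have h4 : (m:ℤ) ∣ ∏ i ∈ Finset.range K, b i :=
      (Int.natCast_dvd_natCast.mpr hdvd).trans (Int.natAbs_dvd.mpr dvd_rfl)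
    exact h4.trans ⟨b K, Finset.prod_range_succ b K⟩
  set e := m.factorization p with he
  have he1 : 1 ≤ e := lt_of_le_of_lt (Nat.zero_le _) (hplt 0)
  have hpe : ((p:ℤ))^e ∣ (m:ℤ) := by
    exact_mod_cast Int.natCast_dvd_natCast.mpr (Nat.ordProj_dvd m p)
  -- stabilization
  have hvs0 : vsum p 0 = 0 := by simp [hvsum]
  obtain ⟨K, hK⟩ := mono_stab e (vsum p) (fun a c hac => hmono p a c hac)
    (fun n => by have := hplt n; omega)
  -- base rationality at x = 0
  obtain ⟨N, T, hT, hperiod⟩ := hper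
  have base : ∃ P Q : Polynomial ℤ, ¬(p:ℤ) ∣ Q.coeff 0 ∧ ∀ n, ((p:ℤ)^e) ∣
      PowerSeries.coeff n ((Q : PowerSeries ℤ) * Fser ℤ b 0 - (P : PowerSeries ℤ)) := by
    set Q0 : Polynomial ℤ := 1 - Polynomial.X ^ T with hQ0def
    set P0 : Polynomial ℤ :=
      PowerSeries.trunc (N + T) ((Q0 : PowerSeries ℤ) * Fser ℤ b 0) with hP0def
    have hQc : Q0.coeff 0 = 1 := by
      simp only [hQ0def, Polynomial.coeff_sub, Polynomial.coeff_one, Polynomial.coeff_X_pow,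
        if_neg (by omega : ¬ (0 = T)), sub_zero]
      simp
    refine ⟨P0, Q0, ?_, ?_⟩
    · rw [hQc]
      exact (Nat.prime_iff_prime_int.mp hp).not_dvd_one
    · intro n
      rw [map_sub, Polynomial.coeff_coe, hP0def, PowerSeries.coeff_trunc]
      by_cases hn : n < N + T
      · rw [if_pos hn, sub_self]
        exact dvd_zero _
      · rw [if_neg hn, sub_zero]
        have hTn : T ≤ n := by omega
        have hcoe : (Q0 : PowerSeries ℤ) = 1 - X ^ T := by
          rw [hQ0def]
          push_cast [Polynomial.coe_sub, Polynomial.coe_one, Polynomial.coe_pow, Polynomial.coe_X]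
          rfl
        have hXF : PowerSeries.coeff n ((X:PowerSeries ℤ)^T * Fser ℤ b 0)
            = wcat b (n - T) 0 := by
          have := PowerSeries.coeff_X_pow_mul (Fser ℤ b 0) T (n - T)
          rw [show n - T + T = n by omega] at this
          rw [this]
          simp [Fser]
        rw [hcoe, sub_mul, one_mul, map_sub, hXF]
        have hmod := hperiod (n - T) (by omega)
        have : (m:ℤ) ∣ wcat b n 0 - wcat b (n - T) 0 := by
          have h := Int.ModEq.dvd hmod
          rw [show n - T + T = n by omega] at h
          have h2 : wcat b n 0 - wcat b (n - T) 0 = -(wcat b (n-T) 0 - wcat b n 0) := by ring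
          rw [h2]
          exact dvd_neg.mpr h
        show ((p:ℤ)^e) ∣ PowerSeries.coeff n (Fser ℤ b 0) - wcat b (n - T) 0
        have hcF : PowerSeries.coeff n (Fser ℤ b 0) = wcat b n 0 := by simp [Fser]
        rw [hcF]
        exact hpe.trans this
  -- descent chain
  have chain : ∀ x, ∃ P Q : Polynomial ℤ, ¬(p:ℤ) ∣ Q.coeff 0 ∧ ∀ n, ((p:ℤ)^(e - vsum p x)) ∣
      PowerSeries.coeff n ((Q : PowerSeries ℤ) * Fser ℤ b x - (P : PowerSeries ℤ)) := by
    intro x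
    induction x with
    | zero => simpa [hvs0] using base
    | succ x ihx =>
      obtain ⟨P, Q, hQ, hc⟩ := ihx
      set v := (b x).natAbs.factorization p with hv
      have hvx : vsum p (x+1) = vsum p x + v := hvsum_succ p x
      have hvf : v < e - vsum p x := by
        have h1 := hplt (x+1)
        have h2 := hmono p x (x+1) (by omega)
        omega
      set u : ℤ := (b x).sign * ((b x).natAbs / p^v : ℕ) with hu_def
      have habs : (b x).natAbs = p^v * ((b x).natAbs / p^v) :=
        (Nat.ordProj_mul_ordCompl_eq_self (b x).natAbs p).symm
      have hbxe : b x = (p:ℤ)^v * u := by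
        rw [hu_def]
        have h1 : b x = (b x).sign * ((b x).natAbs : ℤ) := (Int.sign_mul_natAbs (b x)).symm
        calc b x = (b x).sign * ((b x).natAbs : ℤ) := h1
          _ = (b x).sign * ((p^v * ((b x).natAbs / p^v) : ℕ) : ℤ) := by rw [← habs]
          _ = (p:ℤ)^v * ((b x).sign * ((b x).natAbs / p^v : ℕ)) := by push_cast; ring
      have hu : ¬ (p:ℤ) ∣ u := by
        intro hdvd
        have h1 : ¬ p ∣ (b x).natAbs / p^v :=
          Nat.not_dvd_ordCompl hp (Int.natAbs_ne_zero.mpr (hbne x))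
        apply h1
        have h2 : p ∣ u.natAbs := by
          have h := Int.natAbs_dvd_natAbs.mpr hdvd
          simpa using h
        have h3 : u.natAbs = (b x).natAbs / p^v := by
          rw [hu_def, Int.natAbs_mul, Int.natAbs_sign_of_ne_zero (hbne x), one_mul,
            Int.natAbs_natCast]
        rwa [h3] at h2
      obtain ⟨P', Q', hQ', hc'⟩ := descent p hp b x (e - vsum p x) v hvf u hu hbxe P Q hQ hc
      refine ⟨P', Q', hQ', fun n => ?_⟩
      have := hc' n
      rwa [show e - vsum p x - v = e - vsum p (x+1) by omega] at this
  -- weaken to exponent 1 at K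
  obtain ⟨P, Q, hQ, hc⟩ := chain K
  have hc1 : ∀ n, (p:ℤ) ∣
      PowerSeries.coeff n ((Q : PowerSeries ℤ) * Fser ℤ b K - (P : PowerSeries ℤ)) := by
    intro n
    refine dvd_trans ?_ (hc n)
    exact dvd_pow_self _ (by have := hplt K; omega)
  -- p does not divide b i for i ≥ K
  have hbK : ∀ i, K ≤ i → ¬ (p:ℤ) ∣ b i := by
    intro i hi hdvd
    have h1 := hvsum_succ p i
    have h2 : 0 < (b i).natAbs.factorization p := by
      apply Nat.Prime.factorization_pos_of_dvd hp (Int.natAbs_ne_zero.mpr (hbne i))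
      have := Int.natAbs_dvd_natAbs.mpr hdvd
      simpa using this
    have h3 := hK i hi
    have h4 := hK (i+1) (by omega)
    omega
  -- pass to ZMod p and derive the contradiction
  haveI : Fact p.Prime := ⟨hp⟩
  set φ : ℤ →+* ZMod p := Int.castRingHom (ZMod p) with hφ
  apply no_rational (K := ZMod p) (β := fun i => ((b (K + i) : ℤ) : ZMod p))
    (F := fun x => Fser (ZMod p) b (K + x))
    (U := P.map φ) (V := Q.map φ)
  · intro i h0
    rw [ZMod.intCast_zmod_eq_zero_iff_dvd] at h0
    exact hbK (K + i) (by omega) h0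
  · intro x
    exact Fser_mul_eq_one (ZMod p) b (K + x)
  · intro x
    simp [Fser, wcat_zero]
  · rw [Polynomial.coeff_map]
    intro h0
    exact hQ ((ZMod.intCast_zmod_eq_zero_iff_dvd _ p).mp h0)
  · -- rationality over ZMod p
    ext n
    have hsum : PowerSeries.coeff n
        (((Q.map φ : Polynomial (ZMod p)) : PowerSeries (ZMod p)) * Fser (ZMod p) b (K + 0))
        = ((PowerSeries.coeff n ((Q : PowerSeries ℤ) * Fser ℤ b K) : ℤ) : ZMod p) := by
      rw [PowerSeries.coeff_mul, PowerSeries.coeff_mul]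
      push_cast
      refine Finset.sum_congr rfl fun q _ => ?_
      rw [Polynomial.coeff_map]
      simp [Fser, hφ]
    rw [hsum, Polynomial.coeff_coe, Polynomial.coeff_map]
    have h2 : ((PowerSeries.coeff n ((Q : PowerSeries ℤ) * Fser ℤ b K) : ℤ) : ZMod p)
        = ((P.coeff n : ℤ) : ZMod p) := by
      rw [← sub_eq_zero, ← Int.cast_sub, ZMod.intCast_zmod_eq_zero_iff_dvd]
      have h := hc1 n
      rwa [map_sub, Polynomial.coeff_coe] at h
    rw [h2, hφ]
    simp


/-- The weighted Catalan numbers `C_n^b` are eventually periodic modulo `m > 0`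
if and only if `m ∣ b(0)·b(1)⋯b(k)` for some `k ≥ 0`. -/
theorem weighted_catalan_eventually_periodic_iff
    (m : ℕ) (hm : 0 < m) (b : ℕ → ℤ) :
    (∃ (N T : ℕ), 0 < T ∧ ∀ n : ℕ, N ≤ n →
      wcat b (n + T) 0 ≡ wcat b n 0 [ZMOD (m : ℤ)]) ↔
    (∃ k : ℕ, (m : ℤ) ∣ ∏ i ∈ Finset.range (k + 1), b i) := by
  constructor
  · exact hard_direction m hm b
  · rintro ⟨k, hk⟩
    set b' := fun i => if i ≤ k then b i else 0 with hb'
    have htr : ∀ n, (m:ℤ) ∣ wcat b n 0 - wcat b' n 0 := by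
      intro n
      refine dvd_trans ?_ (wcat_trunc b k n 0)
      have hIcc : Finset.Icc 0 k = Finset.range (k+1) := by
        ext i; simp [Nat.lt_succ_iff]
      rwa [hIcc]
    haveI : NeZero m := ⟨hm.ne'⟩
    obtain ⟨P, Q, hQ0, hQ⟩ := trunc_rational (ZMod m) b k (k+1) 0 (by omega)
    obtain ⟨N, T, hT, hNT⟩ :=
      periodic_of_rational (fun n => ((wcat b' n 0 : ℤ) : ZMod m)) P Q hQ0 hQ
    refine ⟨N, T, hT, fun n hn => ?_⟩
    rw [← ZMod.intCast_eq_intCast_iff]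
    have ecast : ∀ j, ((wcat b j 0 : ℤ) : ZMod m) = ((wcat b' j 0 : ℤ) : ZMod m) := by
      intro j
      rw [← sub_eq_zero, ← Int.cast_sub, ZMod.intCast_zmod_eq_zero_iff_dvd]
      exact htr j
    rw [ecast (n + T), ecast n]
    exact hNT n hn
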